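/- Assume the Gibbs distribution μ has the spatial mixing property with constants C₁, C₂ > 0. Then for every B ⊆ Λ ⊆ V and every f : S → ℝ supported on B, any two feasible points ν, ν' ∈ LP_{Λ,DLR} satisfy |ν(f) - ν'(f)| ≤ ‖f‖_∞ · C₁ · |B| · |∂^ex Λ| · exp(-C₂ · dist(B, Λ^c)); in particular, max{ν(f) : ν ∈ LP_{Λ,DLR}} - min{ν(f) : ν ∈ LP_{Λ,DLR}} ≤ ‖f‖_∞ · C₁ · |B| · |∂^ex Λ| · exp(-C₂ · dist(B, Λ^c)). -/

import Mathlib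

namespace GibbsLP

variable {V : Type*} [Fintype V] [DecidableEq V]

/-- Spin configurations on the vertex set `V`; the two spin values `-1, +1` are
encoded by the two-element type `Bool`. -/
abbrev Config (V : Type*) := V → Bool

/-- The configuration `x` with the spin at site `i` flipped (denoted `xⁱ` in the paper). -/
def flip (x : Config V) (i : V) : Config V := Function.update x i (!x i)

/-- Discrete gradient `∇ᵢ f (x) = f(xⁱ) - f(x)`. -/
def grad (f : Config V → ℝ) (i : V) (x : Config V) : ℝ := f (flip x i) - f x

/-- `f` depends only on the spins in `Λ`, i.e. `supp f ⊆ Λ`. -/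
def SupportedOn (f : Config V → ℝ) (Λ : Set V) : Prop :=
  ∀ i ∉ Λ, ∀ x, f (flip x i) = f x

/-- The support `supp f = {i : ∇ᵢ f ≠ 0}` of an observable. -/
def sptSet (f : Config V → ℝ) : Set V := {i | ∃ x, f (flip x i) ≠ f x}

/-- Sup norm of an observable. -/
noncomputable def supNorm {α : Type*} (f : α → ℝ) : ℝ := ⨆ x, |f x|

/-- The Hamiltonian `H(x) = β ∑_{{i,j} ∈ E} h_{ij}(x_i, x_j)`; each unordered edge is
counted once (hence the factor `1/2` for the ordered double sum). -/
noncomputable def ham (G : SimpleGraph V) [DecidableRel G.Adj] (β : ℝ)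
    (h : V → V → Bool → Bool → ℝ) (x : Config V) : ℝ :=
  β * ((1 : ℝ) / 2 * ∑ i : V, ∑ j : V, if G.Adj i j then h i j (x i) (x j) else 0)

/-- The Gibbs distribution `μ(x) = e^{-H(x)} / Z`. -/
noncomputable def gibbs (H : Config V → ℝ) (x : Config V) : ℝ :=
  Real.exp (-H x) / ∑ y : Config V, Real.exp (-H y)

/-- `ν` is a probability distribution. -/
def IsDist {α : Type*} [Fintype α] (ν : α → ℝ) : Prop :=
  (∀ a, 0 ≤ ν a) ∧ ∑ a, ν a = 1

/-- Spin configurations on a subset `A ⊆ V`. -/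
abbrev SubConfig {V : Type*} (A : Finset V) := {i : V // i ∈ A} → Bool

/-- Restriction of a configuration to `A`. -/
def restrict (A : Finset V) (x : Config V) : SubConfig A := fun i => x i.1

/-- Extension of a configuration on `A` to all of `V` (by an arbitrary fixed value outside). -/
def extendC (A : Finset V) (y : SubConfig A) : Config V :=
  fun i => if h : i ∈ A then y ⟨i, h⟩ else true

/-- Flip the spin of `y : SubConfig A` at site `i` (identity if `i ∉ A`). -/
def flipAt (A : Finset V) (y : SubConfig A) (i : V) : SubConfig A :=
  fun j => if j.1 = i then !(y j) else y j

/-- External boundary `∂ᵉˣ Λ = {j ∉ Λ : ∃ i ∈ Λ, {i,j} ∈ E}`. -/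
def extBoundary (G : SimpleGraph V) [DecidableRel G.Adj] (Λ : Finset V) : Finset V :=
  Finset.univ.filter fun j => j ∉ Λ ∧ ∃ i ∈ Λ, G.Adj i j

/-- External boundary of a set of vertices (set version). -/
def extBoundarySet (G : SimpleGraph V) (A : Set V) : Set V :=
  {j | j ∉ A ∧ ∃ i ∈ A, G.Adj i j}

/-- `Λ̄ = Λ ∪ ∂ᵉˣ Λ`. -/
def closure (G : SimpleGraph V) [DecidableRel G.Adj] (Λ : Finset V) : Finset V :=
  Λ ∪ extBoundary G Λ

/-- `∇ᵢ H` evaluated on a configuration on `A` (well defined for `i ∈ Λ`, `A = Λ̄`, since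
then `∇ᵢ H` only depends on the spins in `Λ̄`). -/
noncomputable def gradH (A : Finset V) (H : Config V → ℝ) (i : V) (y : SubConfig A) : ℝ :=
  H (flip (extendC A y) i) - H (extendC A y)

/-- Expectation `ν(f)` of an observable `f` supported in `A` under a distribution `ν` on
`Σ^A`. -/
noncomputable def lexp {A : Finset V} (ν : SubConfig A → ℝ) (f : Config V → ℝ) : ℝ :=
  ∑ y : SubConfig A, ν y * f (extendC A y)

/-- The DLR linear program: distributions on `Σ^{Λ̄}` satisfying the local spin-flip
equations `ν(y) = ν(yⁱ) e^{∇ᵢH(y)}` for all `y` and `i ∈ Λ`. -/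
def LPdlr (G : SimpleGraph V) [DecidableRel G.Adj] (H : Config V → ℝ) (Λ : Finset V) :
    Set (SubConfig (closure G Λ) → ℝ) :=
  {ν | IsDist ν ∧ ∀ y, ∀ i ∈ Λ,
      ν y = ν (flipAt (closure G Λ) y i) * Real.exp (gradH (closure G Λ) H i y)}

/-- Values `ν(f)` over feasible points `ν` of the DLR linear program. -/
def dlrVals (G : SimpleGraph V) [DecidableRel G.Adj] (H : Config V → ℝ) (Λ : Finset V)
    (f : Config V → ℝ) : Set ℝ :=
  {t | ∃ ν ∈ LPdlr G H Λ, t = lexp ν f}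

/-- Marginal of a distribution `μ` on `Σ^V` on the sites in `A`. -/
noncomputable def marg (A : Finset V) (μ : Config V → ℝ) : SubConfig A → ℝ :=
  fun y => ∑ x : Config V, if restrict A x = y then μ x else 0

/-- The Hamiltonian truncated to `Λ` with boundary condition `η` on `∂ᵉˣ Λ`. -/
noncomputable def hamLoc (G : SimpleGraph V) [DecidableRel G.Adj] (β : ℝ)
    (h : V → V → Bool → Bool → ℝ) (Λ : Finset V)
    (η : SubConfig (extBoundary G Λ)) (x : SubConfig Λ) : ℝ :=
  β * ((1 : ℝ) / 2 * (∑ i ∈ Λ.attach, ∑ j ∈ Λ.attach,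
        if G.Adj i.1 j.1 then h i.1 j.1 (x i) (x j) else 0)
    + ∑ i ∈ Λ.attach, ∑ j ∈ (extBoundary G Λ).attach,
        if G.Adj i.1 j.1 then h i.1 j.1 (x i) (η j) else 0)

/-- The local Gibbs state `μ_Λ^η` on `Λ` with boundary condition `η`. -/
noncomputable def gibbsLoc (G : SimpleGraph V) [DecidableRel G.Adj] (β : ℝ)
    (h : V → V → Bool → Bool → ℝ) (Λ : Finset V)
    (η : SubConfig (extBoundary G Λ)) (x : SubConfig Λ) : ℝ :=
  Real.exp (-(hamLoc G β h Λ η x)) /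
    ∑ x' : SubConfig Λ, Real.exp (-(hamLoc G β h Λ η x'))

/-- Expectation `μ_Λ^η(f)` of an observable supported in `Λ` under the local Gibbs state. -/
noncomputable def gibbsLocExp (G : SimpleGraph V) [DecidableRel G.Adj] (β : ℝ)
    (h : V → V → Bool → Bool → ℝ) (Λ : Finset V)
    (η : SubConfig (extBoundary G Λ)) (f : Config V → ℝ) : ℝ :=
  ∑ x : SubConfig Λ, gibbsLoc G β h Λ η x * f (extendC Λ x)

/-- Combine `x ∈ Σ^Λ` and `η ∈ Σ^{∂ᵉˣΛ}` into a configuration `(x, η) ∈ Σ^{Λ̄}`. -/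
def glue (G : SimpleGraph V) [DecidableRel G.Adj] (Λ : Finset V)
    (x : SubConfig Λ) (η : SubConfig (extBoundary G Λ)) : SubConfig (closure G Λ) :=
  fun i => if h : i.1 ∈ Λ then x ⟨i.1, h⟩
    else η ⟨i.1, by
      have hi := i.2
      simp only [closure, Finset.mem_union] at hi
      tauto⟩

/-- A local (single-site, finite-range, bounded-rate) Markov chain on `Σ^V`. -/
structure IsLocalMC (G : SimpleGraph V) (P : Config V → Config V → ℝ) : Prop where
  nonneg : ∀ x x', 0 ≤ P x x'
  rowSum : ∀ x, ∑ x', P x x' = 1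
  /-- `P_{x,x'} = 0` if `x'` differs from `x` on more than one site. -/
  singleSite : ∀ x x', x' ≠ x → (∀ i, x' ≠ flip x i) → P x x' = 0
  /-- `P_{x,xⁱ}` only depends on the spins in the closed neighborhood of `i`. -/
  locality : ∀ i : V, ∀ x x' : Config V, x i = x' i →
      (∀ j, G.Adj i j → x j = x' j) → P x (flip x i) = P x' (flip x' i)
  /-- `P_{x,x'} ≤ 1/n` off the diagonal. -/
  bounded : ∀ x x', x ≠ x' → P x x' ≤ 1 / (Fintype.card V : ℝ)

/-- The Markov-chain linear program: distributions on `Σ^{Λ̄}` satisfying the stationarity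
equations `ν(Pg) = ν(g)` for all `g` supported on `Λ`. -/
def LPmc (G : SimpleGraph V) [DecidableRel G.Adj] (P : Config V → Config V → ℝ)
    (Λ : Finset V) : Set (SubConfig (closure G Λ) → ℝ) :=
  {ν | IsDist ν ∧ ∀ g : Config V → ℝ, SupportedOn g ↑Λ →
      lexp ν ((Matrix.of P).mulVec g) = lexp ν g}

/-- Values `ν(f)` over feasible points `ν` of the Markov-chain linear program. -/
def mcVals (G : SimpleGraph V) [DecidableRel G.Adj] (P : Config V → Config V → ℝ)
    (Λ : Finset V) (f : Config V → ℝ) : Set ℝ :=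
  {t | ∃ ν ∈ LPmc G P Λ, t = lexp ν f}

/-- The heat-bath dynamics: site `i` is flipped with probability
`c(i,x) = e^{-∇ᵢH(x)} / (1 + e^{-∇ᵢH(x)})`, each site being selected with probability `1/n`. -/
noncomputable def heatBath (H : Config V → ℝ) (x x' : Config V) : ℝ :=
  if x' = x then
    1 - (∑ i : V, Real.exp (-(grad H i x)) / (1 + Real.exp (-(grad H i x)))) /
      (Fintype.card V : ℝ)
  else
    ∑ i : V, if x' = flip x i then
      (Real.exp (-(grad H i x)) / (1 + Real.exp (-(grad H i x)))) / (Fintype.card V : ℝ)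
    else 0

/-- Marginal on `Σ^A` of a distribution on `Σ^B`, for `A ⊆ B`. -/
noncomputable def margTo {A B : Finset V} (hAB : A ⊆ B) (ν : SubConfig B → ℝ) :
    SubConfig A → ℝ :=
  fun z => ∑ y : SubConfig B,
    if (fun i : {i : V // i ∈ A} => y ⟨i.1, hAB i.2⟩) = z then ν y else 0

theorem closure_mono (G : SimpleGraph V) [DecidableRel G.Adj] {Λ Λ' : Finset V}
    (hs : Λ ⊆ Λ') : closure G Λ ⊆ closure G Λ' := by
  intro j hj
  simp only [closure, Finset.mem_union, extBoundary, Finset.mem_filter, Finset.mem_univ,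
    true_and] at hj ⊢
  by_cases hjΛ' : j ∈ Λ'
  · exact Or.inl hjΛ'
  · rcases hj with hj | ⟨hjn, i, hiΛ, hadj⟩
    · exact absurd (hs hj) hjΛ'
    · exact Or.inr ⟨hjΛ', i, hs hiΛ, hadj⟩

/-- The spatial mixing (weak decay of correlations) property of Definition 3: for all
`B ⊆ Λ`, all `f` supported on `B`, and all boundary conditions `η, τ`,
`|μ_Λ^η(f) - μ_Λ^τ(f)| ≤ ‖f‖_∞ C₁ |B| |∂ᵉˣΛ| e^{-C₂ dist(B, Λᶜ)}`
(stated for every `r` with `r ≤ dist(i,j)` for all `i ∈ B`, `j ∉ Λ`). -/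
def SpatialMixing (G : SimpleGraph V) [DecidableRel G.Adj]
    (β : ℝ) (h : V → V → Bool → Bool → ℝ) (C₁ C₂ : ℝ) : Prop :=
  ∀ B Λ : Finset V, B ⊆ Λ → ∀ f : Config V → ℝ, SupportedOn f ↑B →
    ∀ r : ℕ, (∀ i ∈ B, ∀ j ∉ Λ, (r : ℕ∞) ≤ G.edist i j) →
    ∀ η τ : SubConfig (extBoundary G Λ),
      |gibbsLocExp G β h Λ η f - gibbsLocExp G β h Λ τ f| ≤
        supNorm f * C₁ * B.card * (extBoundary G Λ).card * Real.exp (-C₂ * r)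

set_option linter.unusedSectionVars false

section StatementSeven

variable {V : Type*} [Fintype V] [DecidableEq V]

private lemma flip_congr {ι : Type*} [Fintype ι] [DecidableEq ι]
    (g : (ι → Bool) → ℝ) (p : ι → Prop)
    (hg : ∀ x i, p i → g (Function.update x i (!x i)) = g x) :
    ∀ x y : ι → Bool, (∀ i, ¬ p i → x i = y i) → g x = g y := by
  classical
  have main : ∀ (n : ℕ) (y x : ι → Bool),
      (Finset.univ.filter fun i => x i ≠ y i).card ≤ n →
      (∀ i, ¬ p i → x i = y i) → g x = g y := by
    intro n
    induction n with
    | zero =>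
      intro y x hcard _
      have hx : x = y := by
        funext i
        by_contra hne
        have hmem : i ∈ Finset.univ.filter fun i => x i ≠ y i := by simp [hne]
        have := Finset.card_pos.mpr ⟨i, hmem⟩
        omega
      rw [hx]
    | succ n ih =>
      intro y x hcard hxy
      by_cases hxeq : x = y
      · rw [hxeq]
      · have hne : (Finset.univ.filter fun i => x i ≠ y i).Nonempty := by
          rw [Finset.filter_nonempty_iff]
          by_contra hc
          push_neg at hc
          exact hxeq (funext fun i => hc i (Finset.mem_univ i))
        obtain ⟨i, hi⟩ := hne
        have hi' : x i ≠ y i := by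
          simpa using (Finset.mem_filter.mp hi).2
        have hpi : p i := by
          by_contra hp
          exact hi' (hxy i hp)
        have hval : (!x i) = y i := by
          cases hx : x i <;> cases hy : y i <;> simp_all
        have hfilter : (Finset.univ.filter fun j => Function.update x i (!x i) j ≠ y j)
            = (Finset.univ.filter fun j => x j ≠ y j).erase i := by
          ext j
          simp only [Finset.mem_filter, Finset.mem_univ, true_and, Finset.mem_erase]
          rcases eq_or_ne j i with rfl | hj
          · simp [hval]
          · simp [Function.update_of_ne hj, hj]
        rw [← hg x i hpi]
        apply ih y
        · rw [hfilter, Finset.card_erase_of_mem hi]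
          omega
        · intro j hj
          rcases eq_or_ne j i with rfl | hj'
          · exact absurd hpi hj
          · rw [Function.update_of_ne hj']
            exact hxy j hj
  intro x y hxy
  exact main _ y x le_rfl hxy

private lemma supportedOn_congr {f : Config V → ℝ} {Bs : Set V} (hf : SupportedOn f Bs)
    {x y : Config V} (hxy : ∀ i ∈ Bs, x i = y i) : f x = f y :=
  flip_congr f (fun i => i ∉ Bs) (fun x i hi => hf i hi x) x y
    (fun i hi => hxy i (not_not.mp hi))

private lemma flip_apply_self (x : Config V) (i : V) : flip x i i = !x i := by
  simp [flip]

private lemma flip_apply_ne (x : Config V) {i k : V} (hk : k ≠ i) : flip x i k = x k := by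
  simp [flip, Function.update_of_ne hk]

private lemma flipAt_apply_ne {A : Finset V} (y : SubConfig A) {i : V}
    (j : {a : V // a ∈ A}) (hj : j.1 ≠ i) : flipAt A y i j = y j := by
  simp [flipAt, hj]

private lemma flipAt_apply_eq {A : Finset V} (y : SubConfig A) {i : V}
    (j : {a : V // a ∈ A}) (hj : j.1 = i) : flipAt A y i j = !(y j) := by
  simp [flipAt, hj]

private lemma flipAt_eq_update {A : Finset V} (y : SubConfig A) (j : {a : V // a ∈ A}) :
    flipAt A y j.1 = Function.update y j (!(y j)) := by
  funext k
  rcases eq_or_ne k j with rfl | hk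
  · rw [Function.update_self, flipAt_apply_eq _ _ rfl]
  · have hk1 : k.1 ≠ j.1 := fun hc => hk (Subtype.ext hc)
    rw [Function.update_of_ne hk, flipAt_apply_ne _ _ hk1]

private lemma mem_extBoundary_iff {G : SimpleGraph V} [DecidableRel G.Adj] {Λ : Finset V}
    {j : V} : j ∈ extBoundary G Λ ↔ j ∉ Λ ∧ ∃ i ∈ Λ, G.Adj i j := by
  simp [extBoundary]

private lemma mem_closure_left {G : SimpleGraph V} [DecidableRel G.Adj] {Λ : Finset V}
    {i : V} (hi : i ∈ Λ) : i ∈ closure G Λ :=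
  Finset.mem_union_left _ hi

private lemma mem_closure_right {G : SimpleGraph V} [DecidableRel G.Adj] {Λ : Finset V}
    {j : V} (hj : j ∈ extBoundary G Λ) : j ∈ closure G Λ :=
  Finset.mem_union_right _ hj

private lemma adj_mem_closure {G : SimpleGraph V} [DecidableRel G.Adj] {Λ : Finset V}
    {i k : V} (hi : i ∈ Λ) (hik : G.Adj i k) : k ∈ closure G Λ := by
  by_cases hk : k ∈ Λ
  · exact mem_closure_left hk
  · exact mem_closure_right (mem_extBoundary_iff.mpr ⟨hk, i, hi, hik⟩)

private lemma not_mem_of_mem_extBoundary {G : SimpleGraph V} [DecidableRel G.Adj]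
    {Λ : Finset V} {j : V} (hj : j ∈ extBoundary G Λ) : j ∉ Λ :=
  (mem_extBoundary_iff.mp hj).1

private lemma mem_bdry_of_mem_closure {G : SimpleGraph V} [DecidableRel G.Adj]
    {Λ : Finset V} {j : V} (hj : j ∈ closure G Λ) (hjΛ : j ∉ Λ) : j ∈ extBoundary G Λ := by
  simp only [closure, Finset.mem_union] at hj
  tauto

private lemma glue_apply_mem {G : SimpleGraph V} [DecidableRel G.Adj] {Λ : Finset V}
    (x : SubConfig Λ) (η : SubConfig (extBoundary G Λ))
    (k : {a : V // a ∈ closure G Λ}) (hk : k.1 ∈ Λ) :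
    glue G Λ x η k = x ⟨k.1, hk⟩ := by
  simp [glue, hk]

private lemma glue_apply_not_mem {G : SimpleGraph V} [DecidableRel G.Adj] {Λ : Finset V}
    (x : SubConfig Λ) (η : SubConfig (extBoundary G Λ))
    (k : {a : V // a ∈ closure G Λ}) (hk : k.1 ∈ extBoundary G Λ) :
    glue G Λ x η k = η ⟨k.1, hk⟩ := by
  simp [glue, not_mem_of_mem_extBoundary hk]

private def intOf {G : SimpleGraph V} [DecidableRel G.Adj] {Λ : Finset V}
    (y : SubConfig (closure G Λ)) : SubConfig Λ :=
  fun i => y ⟨i.1, mem_closure_left i.2⟩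

private def bdryOf {G : SimpleGraph V} [DecidableRel G.Adj] {Λ : Finset V}
    (y : SubConfig (closure G Λ)) : SubConfig (extBoundary G Λ) :=
  fun j => y ⟨j.1, mem_closure_right j.2⟩

private lemma intOf_glue {G : SimpleGraph V} [DecidableRel G.Adj] {Λ : Finset V}
    (x : SubConfig Λ) (η : SubConfig (extBoundary G Λ)) : intOf (glue G Λ x η) = x := by
  funext i
  exact glue_apply_mem x η _ i.2

private lemma bdryOf_glue {G : SimpleGraph V} [DecidableRel G.Adj] {Λ : Finset V}
    (x : SubConfig Λ) (η : SubConfig (extBoundary G Λ)) : bdryOf (glue G Λ x η) = η := by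
  funext j
  exact glue_apply_not_mem x η _ j.2

private lemma glue_intOf_bdryOf {G : SimpleGraph V} [DecidableRel G.Adj] {Λ : Finset V}
    (y : SubConfig (closure G Λ)) : glue G Λ (intOf y) (bdryOf y) = y := by
  funext i
  by_cases hi : i.1 ∈ Λ
  · rw [glue_apply_mem _ _ _ hi]; rfl
  · rw [glue_apply_not_mem _ _ _ (mem_bdry_of_mem_closure i.2 hi)]; rfl

private def glueEquiv (G : SimpleGraph V) [DecidableRel G.Adj] (Λ : Finset V) :
    (SubConfig Λ × SubConfig (extBoundary G Λ)) ≃ SubConfig (closure G Λ) where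
  toFun p := glue G Λ p.1 p.2
  invFun y := (intOf y, bdryOf y)
  left_inv p := by
    obtain ⟨x, η⟩ := p
    exact Prod.ext (intOf_glue x η) (bdryOf_glue x η)
  right_inv y := glue_intOf_bdryOf y

private lemma extendC_glue_of_mem {G : SimpleGraph V} [DecidableRel G.Adj] {Λ : Finset V}
    (x : SubConfig Λ) (η : SubConfig (extBoundary G Λ)) {k : V} (hk : k ∈ Λ) :
    extendC (closure G Λ) (glue G Λ x η) k = x ⟨k, hk⟩ := by
  rw [extendC]
  rw [dif_pos (mem_closure_left hk : k ∈ closure G Λ)]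
  exact glue_apply_mem x η _ hk

private lemma extendC_glue_of_bdry {G : SimpleGraph V} [DecidableRel G.Adj] {Λ : Finset V}
    (x : SubConfig Λ) (η : SubConfig (extBoundary G Λ)) {k : V} (hk : k ∈ extBoundary G Λ) :
    extendC (closure G Λ) (glue G Λ x η) k = η ⟨k, hk⟩ := by
  rw [extendC]
  rw [dif_pos (mem_closure_right hk : k ∈ closure G Λ)]
  exact glue_apply_not_mem x η _ hk

private lemma flipAt_glue {G : SimpleGraph V} [DecidableRel G.Adj] {Λ : Finset V}
    (x : SubConfig Λ) (η : SubConfig (extBoundary G Λ)) {i : V} (hi : i ∈ Λ) :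
    flipAt (closure G Λ) (glue G Λ x η) i = glue G Λ (flipAt Λ x i) η := by
  funext k
  by_cases hk : k.1 = i
  · have hkΛ : k.1 ∈ Λ := hk ▸ hi
    rw [flipAt_apply_eq (A := closure G Λ) (glue G Λ x η) k hk,
      glue_apply_mem (flipAt Λ x i) η k hkΛ,
      flipAt_apply_eq (A := Λ) x ⟨k.1, hkΛ⟩ hk, glue_apply_mem x η k hkΛ]
  · rw [flipAt_apply_ne (A := closure G Λ) (glue G Λ x η) k hk]
    by_cases hkΛ : k.1 ∈ Λ
    · rw [glue_apply_mem x η k hkΛ, glue_apply_mem (flipAt Λ x i) η k hkΛ,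
        flipAt_apply_ne (A := Λ) x ⟨k.1, hkΛ⟩ hk]
    · have hib := mem_bdry_of_mem_closure k.2 hkΛ
      rw [glue_apply_not_mem x η k hib, glue_apply_not_mem (flipAt Λ x i) η k hib]

private lemma flip_extendC_glue {G : SimpleGraph V} [DecidableRel G.Adj] {Λ : Finset V}
    (x : SubConfig Λ) (η : SubConfig (extBoundary G Λ)) {i : V} (hi : i ∈ Λ) :
    flip (extendC (closure G Λ) (glue G Λ x η)) i
      = extendC (closure G Λ) (glue G Λ (flipAt Λ x i) η) := by
  rw [← flipAt_glue x η hi]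
  funext k
  rcases eq_or_ne k i with rfl | hk
  · rw [flip_apply_self, extendC, extendC, dif_pos (mem_closure_left hi : k ∈ closure G Λ),
      dif_pos (mem_closure_left hi : k ∈ closure G Λ), flipAt_apply_eq]
    rfl
  · rw [flip_apply_ne _ hk, extendC, extendC]
    by_cases hkc : k ∈ closure G Λ
    · rw [dif_pos hkc, dif_pos hkc, flipAt_apply_ne _ _ hk]
    · rw [dif_neg hkc, dif_neg hkc]

private lemma double_sum_flip {ι : Type*} [DecidableEq ι] (s : Finset ι)
    (t t' : ι → ι → ℝ) (i : ι) (hi : i ∈ s)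
    (hoff : ∀ j ∈ s, ∀ k ∈ s, j ≠ i → k ≠ i → t' j k = t j k)
    (hsymm : ∀ j ∈ s, ∀ k ∈ s, t j k = t k j)
    (hsymm' : ∀ j ∈ s, ∀ k ∈ s, t' j k = t' k j)
    (hdiag : t' i i = t i i) :
    (∑ j ∈ s, ∑ k ∈ s, t' j k) - ∑ j ∈ s, ∑ k ∈ s, t j k
      = 2 * ∑ k ∈ s, (t' i k - t i k) := by
  have hd : (∑ j ∈ s, ∑ k ∈ s, t' j k) - ∑ j ∈ s, ∑ k ∈ s, t j k
      = ∑ j ∈ s, ∑ k ∈ s, (t' j k - t j k) := by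
    rw [← Finset.sum_sub_distrib]
    exact Finset.sum_congr rfl fun j _ => (Finset.sum_sub_distrib _ _).symm
  rw [hd, ← Finset.add_sum_erase _ _ hi]
  have h1 : ∑ j ∈ s.erase i, ∑ k ∈ s, (t' j k - t j k)
      = ∑ j ∈ s.erase i, (t' j i - t j i) := by
    refine Finset.sum_congr rfl fun j hj => ?_
    have hjs := Finset.mem_of_mem_erase hj
    have hjne := Finset.ne_of_mem_erase hj
    refine Finset.sum_eq_single_of_mem i hi fun k hk hkne => ?_
    rw [hoff j hjs k hk hjne hkne]
    ring
  rw [h1]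
  have h2 : ∑ j ∈ s.erase i, (t' j i - t j i) = ∑ k ∈ s, (t' i k - t i k) := by
    have e1 : ∑ j ∈ s, (t' j i - t j i)
        = (t' i i - t i i) + ∑ j ∈ s.erase i, (t' j i - t j i) :=
      (Finset.add_sum_erase _ _ hi).symm
    have e2 : ∑ j ∈ s, (t' j i - t j i) = ∑ k ∈ s, (t' i k - t i k) :=
      Finset.sum_congr rfl fun j hj => by rw [hsymm j hj i hi, hsymm' j hj i hi]
    rw [hdiag] at e1
    rw [← e2, e1]
    ring
  rw [h2]
  ring

private lemma double_sum_flip_row {ι κ : Type*} [DecidableEq ι] (s : Finset ι)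
    (tb : Finset κ) (u u' : ι → κ → ℝ) (i : ι) (hi : i ∈ s)
    (hoff : ∀ j ∈ s, j ≠ i → ∀ k ∈ tb, u' j k = u j k) :
    (∑ j ∈ s, ∑ k ∈ tb, u' j k) - ∑ j ∈ s, ∑ k ∈ tb, u j k
      = ∑ k ∈ tb, (u' i k - u i k) := by
  have hd : (∑ j ∈ s, ∑ k ∈ tb, u' j k) - ∑ j ∈ s, ∑ k ∈ tb, u j k
      = ∑ j ∈ s, ∑ k ∈ tb, (u' j k - u j k) := by
    rw [← Finset.sum_sub_distrib]
    exact Finset.sum_congr rfl fun j _ => (Finset.sum_sub_distrib _ _).symm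
  rw [hd]
  refine Finset.sum_eq_single_of_mem i hi fun j hj hjne => ?_
  refine Finset.sum_eq_zero fun k hk => ?_
  rw [hoff j hj hjne k hk]
  ring

end StatementSeven

section StatementSeven2

variable {V : Type*} [Fintype V] [DecidableEq V]

private lemma ham_flip_sub (G : SimpleGraph V) [DecidableRel G.Adj] (β : ℝ)
    (h : V → V → Bool → Bool → ℝ)
    (hsym : ∀ i j a b, h i j a b = h i j b a) (hsym' : ∀ i j, h i j = h j i)
    (x : Config V) (i : V) :
    ham G β h (flip x i) - ham G β h x =
      β * ∑ k : V, (if G.Adj i k then h i k (!(x i)) (x k) - h i k (x i) (x k) else 0) := by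
  have key := double_sum_flip (Finset.univ : Finset V)
    (fun j k => if G.Adj j k then h j k (x j) (x k) else 0)
    (fun j k => if G.Adj j k then h j k (flip x i j) (flip x i k) else 0)
    i (Finset.mem_univ i)
    (by
      intro j _ k _ hj hk
      rw [flip_apply_ne x hj, flip_apply_ne x hk])
    (by
      intro j _ k _
      by_cases hadj : G.Adj j k
      · rw [if_pos hadj, if_pos hadj.symm, hsym' j k, hsym k j]
      · rw [if_neg hadj, if_neg fun hc => hadj hc.symm])
    (by
      intro j _ k _
      by_cases hadj : G.Adj j k
      · rw [if_pos hadj, if_pos hadj.symm, hsym' j k, hsym k j]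
      · rw [if_neg hadj, if_neg fun hc => hadj hc.symm])
    (by simp)
  have hTT : ∑ k : V, ((if G.Adj i k then h i k (flip x i i) (flip x i k) else 0)
      - (if G.Adj i k then h i k (x i) (x k) else 0))
      = ∑ k : V, (if G.Adj i k then h i k (!(x i)) (x k) - h i k (x i) (x k) else 0) := by
    refine Finset.sum_congr rfl fun k _ => ?_
    rcases eq_or_ne k i with rfl | hk
    · simp
    · rw [flip_apply_self, flip_apply_ne x hk]
      by_cases hadj : G.Adj i k
      · rw [if_pos hadj, if_pos hadj, if_pos hadj]
      · rw [if_neg hadj, if_neg hadj, if_neg hadj]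
        ring
  rw [ham, ham]
  linear_combination (β / 2) * key + β * hTT

private lemma hamLoc_flip_sub (G : SimpleGraph V) [DecidableRel G.Adj] (β : ℝ)
    (h : V → V → Bool → Bool → ℝ)
    (hsym : ∀ i j a b, h i j a b = h i j b a) (hsym' : ∀ i j, h i j = h j i)
    (Λ : Finset V) (η : SubConfig (extBoundary G Λ)) (x : SubConfig Λ)
    {i : V} (hi : i ∈ Λ) :
    hamLoc G β h Λ η (flipAt Λ x i) - hamLoc G β h Λ η x
      = β * ((∑ k ∈ Λ.attach,
          if G.Adj i k.1 then h i k.1 (!(x ⟨i, hi⟩)) (x k) - h i k.1 (x ⟨i, hi⟩) (x k) else 0)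
        + ∑ k ∈ (extBoundary G Λ).attach,
          if G.Adj i k.1 then h i k.1 (!(x ⟨i, hi⟩)) (η k) - h i k.1 (x ⟨i, hi⟩) (η k) else 0) := by
  have hiat : (⟨i, hi⟩ : {a : V // a ∈ Λ}) ∈ Λ.attach := Finset.mem_attach _ _
  have key1 := double_sum_flip Λ.attach
    (fun j k => if G.Adj j.1 k.1 then h j.1 k.1 (x j) (x k) else 0)
    (fun j k => if G.Adj j.1 k.1 then h j.1 k.1 (flipAt Λ x i j) (flipAt Λ x i k) else 0)
    ⟨i, hi⟩ hiat
    (by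
      intro j _ k _ hj hk
      have hj1 : j.1 ≠ i := fun hc => hj (Subtype.ext hc)
      have hk1 : k.1 ≠ i := fun hc => hk (Subtype.ext hc)
      rw [flipAt_apply_ne x j hj1, flipAt_apply_ne x k hk1])
    (by
      intro j _ k _
      by_cases hadj : G.Adj j.1 k.1
      · rw [if_pos hadj, if_pos hadj.symm, hsym' j.1 k.1, hsym k.1 j.1]
      · rw [if_neg hadj, if_neg fun hc => hadj hc.symm])
    (by
      intro j _ k _
      by_cases hadj : G.Adj j.1 k.1
      · rw [if_pos hadj, if_pos hadj.symm, hsym' j.1 k.1, hsym k.1 j.1]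
      · rw [if_neg hadj, if_neg fun hc => hadj hc.symm])
    (by simp)
  dsimp only at key1
  have key2 := double_sum_flip_row Λ.attach (extBoundary G Λ).attach
    (fun j k => if G.Adj j.1 k.1 then h j.1 k.1 (x j) (η k) else 0)
    (fun j k => if G.Adj j.1 k.1 then h j.1 k.1 (flipAt Λ x i j) (η k) else 0)
    ⟨i, hi⟩ hiat
    (by
      intro j _ hj k _
      have hj1 : j.1 ≠ i := fun hc => hj (Subtype.ext hc)
      rw [flipAt_apply_ne x j hj1])
  dsimp only at key2
  have hT1 : ∑ k ∈ Λ.attach,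
      ((if G.Adj i k.1 then h i k.1 (flipAt Λ x i ⟨i, hi⟩) (flipAt Λ x i k) else 0)
        - (if G.Adj i k.1 then h i k.1 (x ⟨i, hi⟩) (x k) else 0))
      = ∑ k ∈ Λ.attach,
        (if G.Adj i k.1 then h i k.1 (!(x ⟨i, hi⟩)) (x k) - h i k.1 (x ⟨i, hi⟩) (x k) else 0) := by
    refine Finset.sum_congr rfl fun k _ => ?_
    rcases eq_or_ne k.1 i with hk | hk
    · have : ¬ G.Adj i k.1 := by rw [hk]; exact G.irrefl
      rw [if_neg this, if_neg this, if_neg this]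
      ring
    · rw [flipAt_apply_eq x ⟨i, hi⟩ rfl, flipAt_apply_ne x k hk]
      by_cases hadj : G.Adj i k.1
      · rw [if_pos hadj, if_pos hadj, if_pos hadj]
      · rw [if_neg hadj, if_neg hadj, if_neg hadj]
        ring
  have hT2 : ∑ k ∈ (extBoundary G Λ).attach,
      ((if G.Adj i k.1 then h i k.1 (flipAt Λ x i ⟨i, hi⟩) (η k) else 0)
        - (if G.Adj i k.1 then h i k.1 (x ⟨i, hi⟩) (η k) else 0))
      = ∑ k ∈ (extBoundary G Λ).attach,
        (if G.Adj i k.1 then h i k.1 (!(x ⟨i, hi⟩)) (η k) - h i k.1 (x ⟨i, hi⟩) (η k) else 0) := by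
    refine Finset.sum_congr rfl fun k _ => ?_
    rw [flipAt_apply_eq x ⟨i, hi⟩ rfl]
    by_cases hadj : G.Adj i k.1
    · rw [if_pos hadj, if_pos hadj, if_pos hadj]
    · rw [if_neg hadj, if_neg hadj, if_neg hadj]
      ring
  rw [hamLoc, hamLoc]
  linear_combination (β / 2) * key1 + β * key2 + β * hT1 + β * hT2

private lemma gradH_glue (G : SimpleGraph V) [DecidableRel G.Adj] (β : ℝ)
    (h : V → V → Bool → Bool → ℝ)
    (hsym : ∀ i j a b, h i j a b = h i j b a) (hsym' : ∀ i j, h i j = h j i)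
    (Λ : Finset V) (η : SubConfig (extBoundary G Λ)) (x : SubConfig Λ)
    {i : V} (hi : i ∈ Λ) :
    gradH (closure G Λ) (ham G β h) i (glue G Λ x η)
      = hamLoc G β h Λ η (flipAt Λ x i) - hamLoc G β h Λ η x := by
  rw [gradH, ham_flip_sub G β h hsym hsym' _ i, hamLoc_flip_sub G β h hsym hsym' Λ η x hi]
  congr 1
  set z := extendC (closure G Λ) (glue G Λ x η) with hz
  have hzi : z i = x ⟨i, hi⟩ := extendC_glue_of_mem x η hi
  have hdisj : Disjoint Λ (extBoundary G Λ) :=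
    Finset.disjoint_right.mpr fun j hj => not_mem_of_mem_extBoundary hj
  have hsub : ∑ k : V, (if G.Adj i k then h i k (!(z i)) (z k) - h i k (z i) (z k) else 0)
      = ∑ k ∈ Λ ∪ extBoundary G Λ,
        (if G.Adj i k then h i k (!(z i)) (z k) - h i k (z i) (z k) else 0) := by
    refine (Finset.sum_subset (Finset.subset_univ _) fun k _ hk => ?_).symm
    have : ¬ G.Adj i k := by
      intro hadj
      have := adj_mem_closure hi hadj
      simp only [closure] at this
      exact hk this
    rw [if_neg this]
  rw [hsub, Finset.sum_union hdisj]
  congr 1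
  · rw [← Finset.sum_attach Λ
      (fun k => if G.Adj i k then h i k (!(z i)) (z k) - h i k (z i) (z k) else 0)]
    refine Finset.sum_congr rfl fun k _ => ?_
    rw [hzi, hz, extendC_glue_of_mem x η k.2]
  · rw [← Finset.sum_attach (extBoundary G Λ)
      (fun k => if G.Adj i k then h i k (!(z i)) (z k) - h i k (z i) (z k) else 0)]
    refine Finset.sum_congr rfl fun k _ => ?_
    rw [hzi, hz, extendC_glue_of_bdry x η k.2]

end StatementSeven2

section StatementSeven3

variable {V : Type*} [Fintype V] [DecidableEq V]

private lemma partZ_pos (G : SimpleGraph V) [DecidableRel G.Adj] (β : ℝ)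
    (h : V → V → Bool → Bool → ℝ) (Λ : Finset V) (η : SubConfig (extBoundary G Λ)) :
    0 < ∑ x' : SubConfig Λ, Real.exp (-(hamLoc G β h Λ η x')) :=
  Finset.sum_pos (fun x' _ => Real.exp_pos _) Finset.univ_nonempty

private lemma gibbsLoc_nonneg (G : SimpleGraph V) [DecidableRel G.Adj] (β : ℝ)
    (h : V → V → Bool → Bool → ℝ) (Λ : Finset V) (η : SubConfig (extBoundary G Λ))
    (x : SubConfig Λ) : 0 ≤ gibbsLoc G β h Λ η x :=
  div_nonneg (Real.exp_pos _).le (partZ_pos G β h Λ η).le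

private lemma gibbsLoc_sum_one (G : SimpleGraph V) [DecidableRel G.Adj] (β : ℝ)
    (h : V → V → Bool → Bool → ℝ) (Λ : Finset V) (η : SubConfig (extBoundary G Λ)) :
    ∑ x : SubConfig Λ, gibbsLoc G β h Λ η x = 1 := by
  simp only [gibbsLoc]
  rw [← Finset.sum_div]
  exact div_self (partZ_pos G β h Λ η).ne'

private lemma fiber_eq (G : SimpleGraph V) [DecidableRel G.Adj] (β : ℝ)
    (h : V → V → Bool → Bool → ℝ)
    (hsym : ∀ i j a b, h i j a b = h i j b a) (hsym' : ∀ i j, h i j = h j i)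
    (Λ : Finset V) (ν : SubConfig (closure G Λ) → ℝ)
    (hν : ν ∈ LPdlr G (ham G β h) Λ) (η : SubConfig (extBoundary G Λ)) (x : SubConfig Λ) :
    ν (glue G Λ x η) = (∑ x' : SubConfig Λ, ν (glue G Λ x' η)) * gibbsLoc G β h Λ η x := by
  obtain ⟨hdist, hdlr⟩ := hν
  set g : SubConfig Λ → ℝ :=
    fun x => ν (glue G Λ x η) * Real.exp (hamLoc G β h Λ η x) with hg
  have hconst : ∀ x₁ x₂ : SubConfig Λ, g x₁ = g x₂ := by
    intro x₁ x₂
    refine flip_congr g (fun _ => True) ?_ x₁ x₂ (fun i hi => absurd trivial hi)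
    intro x' j _
    rw [← flipAt_eq_update x' j]
    have hdlr' := hdlr (glue G Λ x' η) j.1 j.2
    rw [flipAt_glue x' η j.2, gradH_glue G β h hsym hsym' Λ η x' j.2] at hdlr'
    rw [hg]
    dsimp only
    rw [hdlr', mul_assoc, ← Real.exp_add, sub_add_cancel]
  have hval : ∀ x' : SubConfig Λ,
      ν (glue G Λ x' η) = g x * Real.exp (-(hamLoc G β h Λ η x')) := by
    intro x'
    rw [hconst x x', hg]
    dsimp only
    rw [mul_assoc, ← Real.exp_add, add_neg_cancel, Real.exp_zero, mul_one]
  have hsum : ∑ x' : SubConfig Λ, ν (glue G Λ x' η)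
      = g x * ∑ x' : SubConfig Λ, Real.exp (-(hamLoc G β h Λ η x')) := by
    rw [Finset.mul_sum]
    exact Finset.sum_congr rfl fun x' _ => hval x'
  have hZ : (∑ x' : SubConfig Λ, Real.exp (-(hamLoc G β h Λ η x'))) ≠ 0 :=
    (partZ_pos G β h Λ η).ne'
  rw [hval x, hsum, gibbsLoc]
  field_simp

private lemma lexp_decomp (G : SimpleGraph V) [DecidableRel G.Adj] (β : ℝ)
    (h : V → V → Bool → Bool → ℝ)
    (hsym : ∀ i j a b, h i j a b = h i j b a) (hsym' : ∀ i j, h i j = h j i)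
    (B Λ : Finset V) (hBΛ : B ⊆ Λ) (f : Config V → ℝ) (hf : SupportedOn f ↑B)
    (ν : SubConfig (closure G Λ) → ℝ) (hν : ν ∈ LPdlr G (ham G β h) Λ) :
    lexp ν f = ∑ η : SubConfig (extBoundary G Λ),
      (∑ x : SubConfig Λ, ν (glue G Λ x η)) * gibbsLocExp G β h Λ η f := by
  have hre : lexp ν f = ∑ p : SubConfig Λ × SubConfig (extBoundary G Λ),
      ν (glue G Λ p.1 p.2) * f (extendC (closure G Λ) (glue G Λ p.1 p.2)) := by
    rw [lexp]
    rw [← Equiv.sum_comp (glueEquiv G Λ)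
      (fun y => ν y * f (extendC (closure G Λ) y))]
    rfl
  rw [hre, Fintype.sum_prod_type_right]
  refine Finset.sum_congr rfl fun η _ => ?_
  rw [gibbsLocExp, Finset.mul_sum]
  refine Finset.sum_congr rfl fun x _ => ?_
  have hfx : f (extendC (closure G Λ) (glue G Λ x η)) = f (extendC Λ x) := by
    refine supportedOn_congr hf fun i hi => ?_
    have hiB : i ∈ B := hi
    have hiΛ : i ∈ Λ := hBΛ hiB
    rw [extendC_glue_of_mem x η hiΛ, extendC, dif_pos hiΛ]
  rw [hfx, fiber_eq G β h hsym hsym' Λ ν hν η x]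
  ring

private lemma weights_sum_one (G : SimpleGraph V) [DecidableRel G.Adj]
    (Λ : Finset V) (ν : SubConfig (closure G Λ) → ℝ) (hν : ∑ y, ν y = 1) :
    ∑ η : SubConfig (extBoundary G Λ), ∑ x : SubConfig Λ, ν (glue G Λ x η) = 1 := by
  rw [← hν, ← Equiv.sum_comp (glueEquiv G Λ) ν, Fintype.sum_prod_type_right]
  rfl

private lemma lpdlr_nonempty (G : SimpleGraph V) [DecidableRel G.Adj] (β : ℝ)
    (h : V → V → Bool → Bool → ℝ)
    (hsym : ∀ i j a b, h i j a b = h i j b a) (hsym' : ∀ i j, h i j = h j i)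
    (Λ : Finset V) : (LPdlr G (ham G β h) Λ).Nonempty := by
  classical
  set η₀ : SubConfig (extBoundary G Λ) := fun _ => true with hη₀
  refine ⟨fun y => if bdryOf y = η₀ then gibbsLoc G β h Λ η₀ (intOf y) else 0, ?_, ?_⟩
  · constructor
    · intro y
      dsimp only
      split
      · exact gibbsLoc_nonneg G β h Λ η₀ _
      · exact le_refl 0
    · rw [← Equiv.sum_comp (glueEquiv G Λ)
        (fun y => if bdryOf y = η₀ then gibbsLoc G β h Λ η₀ (intOf y) else 0),
        Fintype.sum_prod_type_right]
      have : ∀ η : SubConfig (extBoundary G Λ), ∑ x : SubConfig Λ,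
          (if bdryOf (glue G Λ x η) = η₀ then gibbsLoc G β h Λ η₀ (intOf (glue G Λ x η)) else 0)
          = if η = η₀ then 1 else 0 := by
        intro η
        by_cases hη : η = η₀
        · rw [if_pos hη]
          have : ∀ x : SubConfig Λ,
              (if bdryOf (glue G Λ x η) = η₀ then gibbsLoc G β h Λ η₀ (intOf (glue G Λ x η)) else 0)
              = gibbsLoc G β h Λ η₀ x := by
            intro x
            rw [bdryOf_glue, intOf_glue, if_pos hη]
          rw [Finset.sum_congr rfl fun x _ => this x]
          exact gibbsLoc_sum_one G β h Λ η₀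
        · rw [if_neg hη]
          refine Finset.sum_eq_zero fun x _ => ?_
          rw [bdryOf_glue, if_neg hη]
      calc ∑ η : SubConfig (extBoundary G Λ), ∑ x : SubConfig Λ,
            (if bdryOf (glue G Λ x η) = η₀ then gibbsLoc G β h Λ η₀ (intOf (glue G Λ x η)) else 0)
          = ∑ η : SubConfig (extBoundary G Λ), if η = η₀ then 1 else 0 :=
            Finset.sum_congr rfl fun η _ => this η
        _ = 1 := by rw [Finset.sum_ite_eq' Finset.univ η₀ (fun _ => 1), if_pos (Finset.mem_univ _)]
  · intro y i hi
    have hy := (glue_intOf_bdryOf y).symm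
    rw [hy]
    set x := intOf y
    set η := bdryOf y
    dsimp only
    rw [flipAt_glue x η hi, bdryOf_glue, bdryOf_glue, intOf_glue, intOf_glue,
      gradH_glue G β h hsym hsym' Λ η x hi]
    by_cases hη : η = η₀
    · rw [if_pos hη, if_pos hη, hη, gibbsLoc, gibbsLoc, div_mul_eq_mul_div, ← Real.exp_add]
      congr 2
      ring
    · rw [if_neg hη, if_neg hη, zero_mul]

private lemma convex_diff_bound {ι : Type*} [Fintype ι]
    (w w' Gv : ι → ℝ) (M : ℝ)
    (hw : ∀ a, 0 ≤ w a) (hw1 : ∑ a, w a = 1)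
    (hw' : ∀ a, 0 ≤ w' a) (hw'1 : ∑ a, w' a = 1)
    (hGG : ∀ a b, |Gv a - Gv b| ≤ M) :
    |∑ a, w a * Gv a - ∑ b, w' b * Gv b| ≤ M := by
  have h1 : ∑ a, w a * Gv a = ∑ a, ∑ b, w a * w' b * Gv a := by
    refine Finset.sum_congr rfl fun a _ => ?_
    have e : ∑ b, w a * w' b * Gv a = ∑ b, w' b * (w a * Gv a) :=
      Finset.sum_congr rfl fun b _ => by ring
    rw [e, ← Finset.sum_mul, hw'1, one_mul]
  have h2 : ∑ b, w' b * Gv b = ∑ a, ∑ b, w a * w' b * Gv b := by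
    have e : ∀ a, ∑ b, w a * w' b * Gv b = w a * ∑ b, w' b * Gv b := by
      intro a
      rw [Finset.mul_sum]
      exact Finset.sum_congr rfl fun b _ => by ring
    rw [Finset.sum_congr rfl fun a _ => e a, ← Finset.sum_mul, hw1, one_mul]
  have h3 : ∑ a, ∑ b, w a * w' b * Gv a - ∑ a, ∑ b, w a * w' b * Gv b
      = ∑ a, ∑ b, w a * w' b * (Gv a - Gv b) := by
    rw [← Finset.sum_sub_distrib]
    refine Finset.sum_congr rfl fun a _ => ?_
    rw [← Finset.sum_sub_distrib]
    exact Finset.sum_congr rfl fun b _ => by ring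
  rw [h1, h2, h3]
  have h4 : |∑ a, ∑ b, w a * w' b * (Gv a - Gv b)| ≤ ∑ a, ∑ b, w a * w' b * M := by
    refine (Finset.abs_sum_le_sum_abs _ _).trans (Finset.sum_le_sum fun a _ => ?_)
    refine (Finset.abs_sum_le_sum_abs _ _).trans (Finset.sum_le_sum fun b _ => ?_)
    rw [abs_mul, abs_of_nonneg (mul_nonneg (hw a) (hw' b))]
    exact mul_le_mul_of_nonneg_left (hGG a b) (mul_nonneg (hw a) (hw' b))
  have h5 : ∑ a, ∑ b, w a * w' b * M = M := by
    have e : ∀ a, ∑ b, w a * w' b * M = w a * M := by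
      intro a
      have e2 : ∑ b, w a * w' b * M = (∑ b, w' b) * (w a * M) := by
        rw [Finset.sum_mul]
        exact Finset.sum_congr rfl fun b _ => by ring
      rw [e2, hw'1, one_mul]
    rw [Finset.sum_congr rfl fun a _ => e a, ← Finset.sum_mul, hw1, one_mul]
  calc |∑ a, ∑ b, w a * w' b * (Gv a - Gv b)| ≤ ∑ a, ∑ b, w a * w' b * M := h4
    _ = M := h5

end StatementSeven3

/-- Under spatial mixing, the DLR hierarchy converges exponentially fast:
any two feasible points `ν, ν' ∈ LP_{Λ,DLR}` give expectation values for `f` (supported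
on `B ⊆ Λ`) within `‖f‖_∞ C₁ |B| |∂ᵉˣΛ| e^{-C₂ dist(B,Λᶜ)}` of each other; in particular
the max minus the min of the LP values is bounded by the same quantity. -/
theorem LPdlr_convergence_of_spatialMixing (G : SimpleGraph V) [DecidableRel G.Adj]
    (β : ℝ) (hβ : 0 ≤ β) (h : V → V → Bool → Bool → ℝ)
    (hsym : ∀ i j a b, h i j a b = h i j b a) (hsym' : ∀ i j, h i j = h j i)
    (C₁ C₂ : ℝ) (hC₁ : 0 < C₁) (hC₂ : 0 < C₂)
    (hmix : SpatialMixing G β h C₁ C₂)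
    (B Λ : Finset V) (hBΛ : B ⊆ Λ) (f : Config V → ℝ) (hf : SupportedOn f ↑B)
    (r : ℕ) (hr : ∀ i ∈ B, ∀ j ∉ Λ, (r : ℕ∞) ≤ G.edist i j) :
    (∀ ν ∈ LPdlr G (ham G β h) Λ, ∀ ν' ∈ LPdlr G (ham G β h) Λ,
      |lexp ν f - lexp ν' f| ≤
        supNorm f * C₁ * B.card * (extBoundary G Λ).card * Real.exp (-C₂ * r)) ∧
    sSup (dlrVals G (ham G β h) Λ f) - sInf (dlrVals G (ham G β h) Λ f) ≤
      supNorm f * C₁ * B.card * (extBoundary G Λ).card * Real.exp (-C₂ * r) := by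
  classical
  set M := supNorm f * C₁ * (B.card : ℝ) * ((extBoundary G Λ).card : ℝ)
    * Real.exp (-C₂ * r) with hM
  have hGG : ∀ η τ : SubConfig (extBoundary G Λ),
      |gibbsLocExp G β h Λ η f - gibbsLocExp G β h Λ τ f| ≤ M := by
    rw [hM]
    exact hmix B Λ hBΛ f hf r hr
  have part1 : ∀ ν ∈ LPdlr G (ham G β h) Λ, ∀ ν' ∈ LPdlr G (ham G β h) Λ,
      |lexp ν f - lexp ν' f| ≤ M := by
    intro ν hν ν' hν'
    rw [lexp_decomp G β h hsym hsym' B Λ hBΛ f hf ν hν,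
      lexp_decomp G β h hsym hsym' B Λ hBΛ f hf ν' hν']
    exact convex_diff_bound (fun η => ∑ x : SubConfig Λ, ν (glue G Λ x η))
      (fun η => ∑ x : SubConfig Λ, ν' (glue G Λ x η))
      (fun η => gibbsLocExp G β h Λ η f) M
      (fun η => Finset.sum_nonneg fun x _ => hν.1.1 _)
      (weights_sum_one G Λ ν hν.1.2)
      (fun η => Finset.sum_nonneg fun x _ => hν'.1.1 _)
      (weights_sum_one G Λ ν' hν'.1.2)
      hGG
  refine ⟨part1, ?_⟩
  obtain ⟨ν₀, hν₀⟩ := lpdlr_nonempty G β h hsym hsym' Λ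
  have hne : (dlrVals G (ham G β h) Λ f).Nonempty := ⟨lexp ν₀ f, ν₀, hν₀, rfl⟩
  have hdiff : ∀ t ∈ dlrVals G (ham G β h) Λ f, ∀ t' ∈ dlrVals G (ham G β h) Λ f,
      t - t' ≤ M := by
    rintro t ⟨ν, hν, rfl⟩ t' ⟨ν', hν', rfl⟩
    exact (abs_le.mp (part1 ν hν ν' hν')).2
  have h1 : sSup (dlrVals G (ham G β h) Λ f) ≤ sInf (dlrVals G (ham G β h) Λ f) + M := by
    refine csSup_le hne fun t ht => ?_
    have h2 : t - M ≤ sInf (dlrVals G (ham G β h) Λ f) :=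
      le_csInf hne fun t' ht' => by linarith [hdiff t ht t' ht']
    linarith
  linarith

end GibbsLP
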